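/- Every triangle in the hyperbolic plane ℍ² is δ-thin with δ = ln(1+√2): each side lies in the closed δ-neighborhood of the union of the other two sides. -/

import Mathlib

/-- `γ` restricted to the parameter set `s` is an isometric (geodesic) parametrization. -/
def IsGeodesicOn {X : Type*} [MetricSpace X] (γ : ℝ → X) (s : Set ℝ) : Prop :=
  ∀ a ∈ s, ∀ b ∈ s, dist (γ a) (γ b) = |a - b|

/-- `γ` is a geodesic from `x` to `y`, parametrized by `[0, dist x y]`. -/
def GeodesicFrom {X : Type*} [MetricSpace X] (γ : ℝ → X) (x y : X) : Prop :=
  IsGeodesicOn γ (Set.Icc 0 (dist x y)) ∧ γ 0 = x ∧ γ (dist x y) = y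

/-- A geodesic metric space: any two points are joined by a geodesic. -/
def GeodesicSpace (X : Type*) [MetricSpace X] : Prop :=
  ∀ x y : X, ∃ γ : ℝ → X, GeodesicFrom γ x y

/-- A geodesic triangle: three vertices together with geodesic sides joining them. -/
structure GeoTriangle (X : Type*) [MetricSpace X] where
  a : X
  b : X
  c : X
  s1 : ℝ → X
  s2 : ℝ → X
  s3 : ℝ → X
  h1 : GeodesicFrom s1 a b
  h2 : GeodesicFrom s2 b c
  h3 : GeodesicFrom s3 c a

/-- The i-th side of a geodesic triangle, as a subset of `X`. -/
def GeoTriangle.side {X : Type*} [MetricSpace X] (T : GeoTriangle X) : Fin 3 → Set X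
  | 0 => T.s1 '' Set.Icc 0 (dist T.a T.b)
  | 1 => T.s2 '' Set.Icc 0 (dist T.b T.c)
  | 2 => T.s3 '' Set.Icc 0 (dist T.c T.a)

/-- A triangle is δ-thin if each side lies in the closed δ-neighborhood of the
union of the other two sides. -/
def IsThin {X : Type*} [MetricSpace X] (δ : ℝ) (T : GeoTriangle X) : Prop :=
  ∀ i : Fin 3, ∀ p ∈ T.side i, ∃ q ∈ T.side (i + 1) ∪ T.side (i + 2), dist p q ≤ δ

/-- `X` is δ-hyperbolic: every geodesic triangle is δ-thin. -/
def Hyperbolic (X : Type*) [MetricSpace X] (δ : ℝ) : Prop :=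
  ∀ T : GeoTriangle X, IsThin δ T

open UpperHalfPlane Real

noncomputable section ThinAux

namespace ThinAux

/-- the thinness constant -/
def dd : ℝ := Real.log (1 + Real.sqrt 2)

lemma s2_sq : (Real.sqrt 2) ^ 2 = 2 := Real.sq_sqrt (by norm_num)

lemma s2_pos : 0 < Real.sqrt 2 := Real.sqrt_pos.2 (by norm_num)

lemma one_lt_s2 : 1 < Real.sqrt 2 := by nlinarith [s2_sq, s2_pos]

lemma dd_nonneg : 0 ≤ dd := Real.log_nonneg (by nlinarith [s2_pos])

lemma exp_dd : Real.exp dd = 1 + Real.sqrt 2 := Real.exp_log (by positivity)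

lemma exp_neg_dd : Real.exp (-dd) = Real.sqrt 2 - 1 := by
  have h : (1 + Real.sqrt 2)⁻¹ = Real.sqrt 2 - 1 :=
    inv_eq_of_mul_eq_one_left (by nlinarith [s2_sq])
  rw [Real.exp_neg, exp_dd, h]

lemma cosh_dd : Real.cosh dd = Real.sqrt 2 := by
  rw [Real.cosh_eq, exp_dd, exp_neg_dd]; ring

/-- `z` lies on the hyperbolic geodesic segment from `x` to `y`. -/
def seg (x y : ℍ) : Set ℍ := {z | dist x z + dist z y = dist x y}

lemma left_mem_seg (x y : ℍ) : x ∈ seg x y := by simp [seg]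

lemma right_mem_seg (x y : ℍ) : y ∈ seg x y := by simp [seg]

lemma seg_symm (x y : ℍ) : seg x y = seg y x := by
  ext z; simp only [seg, Set.mem_setOf_eq]
  rw [dist_comm x z, dist_comm z y, dist_comm x y]; constructor <;> intro h <;> linarith

lemma seg_union_comm (a b c : ℍ) : seg b c ∪ seg c a = seg a c ∪ seg c b := by
  rw [seg_symm b c, seg_symm c a, Set.union_comm]

/-- distance between two points with equal real part -/
lemma dist_re_eq {z w : ℍ} (h : z.re = w.re) : dist z w = |Real.log z.im - Real.log w.im| := by
  rw [UpperHalfPlane.dist_of_re_eq h, Real.dist_eq]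

lemma abs_log_im_sub_le (z w : ℍ) : |Real.log z.im - Real.log w.im| ≤ dist z w := by
  have := UpperHalfPlane.dist_log_im_le z w
  rwa [Real.dist_eq] at this

lemma cosh_log_im (z w : ℍ) :
    Real.cosh (Real.log z.im - Real.log w.im) = (z.im ^ 2 + w.im ^ 2) / (2 * z.im * w.im) := by
  have hz := z.im_pos; have hw := w.im_pos
  rw [Real.cosh_eq, Real.exp_neg, Real.exp_sub, Real.exp_log hz, Real.exp_log hw]
  field_simp

lemma abs_log_im_sub_lt {z w : ℍ} (h : z.re ≠ w.re) :
    |Real.log z.im - Real.log w.im| < dist z w := by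
  have hz := z.im_pos; have hw := w.im_pos
  have h1 : Real.cosh |Real.log z.im - Real.log w.im| < Real.cosh (dist z w) := by
    rw [Real.cosh_abs, cosh_log_im, UpperHalfPlane.cosh_dist']
    have h2 : (0:ℝ) < 2 * z.im * w.im := by positivity
    have h3 : 0 < (z.re - w.re) ^ 2 := by
      have := sub_ne_zero.2 h
      positivity
    rw [div_lt_div_iff₀ h2 h2]
    nlinarith
  have h2 := Real.cosh_lt_cosh.1 h1
  rw [abs_abs, abs_of_nonneg dist_nonneg] at h2
  exact h2


/-- characterization of geodesic segments between points on the imaginary axis -/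
lemma seg_axis {x y : ℍ} (hx : x.re = 0) (hy : y.re = 0) (hxy : x.im ≤ y.im) :
    seg x y = {z : ℍ | z.re = 0 ∧ x.im ≤ z.im ∧ z.im ≤ y.im} := by
  have hxp := x.im_pos; have hyp := y.im_pos
  have hlog : Real.log x.im ≤ Real.log y.im := Real.log_le_log x.im_pos hxy
  have hdxy : dist x y = Real.log y.im - Real.log x.im := by
    rw [dist_re_eq (hx.trans hy.symm), abs_sub_comm, abs_of_nonneg (by linarith)]
  ext z
  have hzp := z.im_pos
  simp only [seg, Set.mem_setOf_eq]
  constructor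
  · intro hz
    set L1 := Real.log z.im - Real.log x.im with hL1def
    set L2 := Real.log y.im - Real.log z.im with hL2def
    have h1 : |L1| ≤ dist x z := (abs_log_im_sub_le z x).trans_eq (dist_comm z x)
    have h2 : |L2| ≤ dist z y := (abs_log_im_sub_le y z).trans_eq (dist_comm y z)
    have hsum : dist x z + dist z y = L1 + L2 := by rw [hz, hdxy]; ring
    have e1 : |L1| = dist x z ∧ |L2| = dist z y ∧ L1 = |L1| ∧ L2 = |L2| := by
      have := le_abs_self L1
      have := le_abs_self L2
      refine ⟨by linarith, by linarith, by linarith, by linarith⟩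
    have hrez : z.re = 0 := by
      by_contra hne
      have hne' : x.re ≠ z.re := by rw [hx]; exact fun hc => hne hc.symm
      have hlt := abs_log_im_sub_lt hne'
      rw [abs_sub_comm] at hlt
      rw [← hL1def] at hlt
      exact absurd e1.1 hlt.ne
    have hpos1 : (0:ℝ) ≤ L1 := by rw [e1.2.2.1]; exact abs_nonneg L1
    have hpos2 : (0:ℝ) ≤ L2 := by rw [e1.2.2.2]; exact abs_nonneg L2
    refine ⟨hrez, ?_, ?_⟩
    · exact (Real.log_le_log_iff x.im_pos z.im_pos).1 (by rw [hL1def] at hpos1; linarith)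
    · exact (Real.log_le_log_iff z.im_pos y.im_pos).1 (by rw [hL2def] at hpos2; linarith)
  · intro ⟨hz0, hz1, hz2⟩
    have d1 : dist x z = Real.log z.im - Real.log x.im := by
      rw [dist_re_eq (hx.trans hz0.symm), abs_sub_comm,
        abs_of_nonneg (sub_nonneg.2 (Real.log_le_log x.im_pos hz1))]
    have d2 : dist z y = Real.log y.im - Real.log z.im := by
      rw [dist_re_eq (hz0.trans hy.symm), abs_sub_comm,
        abs_of_nonneg (sub_nonneg.2 (Real.log_le_log z.im_pos hz2))]
    rw [d1, d2, hdxy]; ring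


/-- self-maps of `ℍ` that are surjective isometries -/
def IsomH (g : ℍ → ℍ) : Prop :=
  Function.Surjective g ∧ ∀ z w : ℍ, dist (g z) (g w) = dist z w

lemma IsomH.comp {g h : ℍ → ℍ} (hg : IsomH g) (hh : IsomH h) : IsomH (g ∘ h) :=
  ⟨hg.1.comp hh.1, fun z w => (hg.2 _ _).trans (hh.2 z w)⟩

lemma IsomH.seg_iff {g : ℍ → ℍ} (hg : IsomH g) {x y z : ℍ} :
    z ∈ seg x y ↔ g z ∈ seg (g x) (g y) := by
  simp only [seg, Set.mem_setOf_eq, hg.2]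

/-- criterion for two hyperbolic distances being equal, in coordinates -/
lemma dist_eq_dist {z w z' w' : ℍ}
    (h : ((z'.re - w'.re) ^ 2 + (z'.im - w'.im) ^ 2) * (z.im * w.im)
       = ((z.re - w.re) ^ 2 + (z.im - w.im) ^ 2) * (z'.im * w'.im)) :
    dist z' w' = dist z w := by
  rw [UpperHalfPlane.dist_eq, UpperHalfPlane.dist_eq]
  congr 1
  apply congrArg
  have e1 : ∀ u v : ℍ, dist (u : ℂ) (v : ℂ) = Real.sqrt ((u.re - v.re) ^ 2 + (u.im - v.im) ^ 2) := by
    intro u v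
    rw [Complex.dist_eq_re_im, UpperHalfPlane.coe_re, UpperHalfPlane.coe_re,
      UpperHalfPlane.coe_im, UpperHalfPlane.coe_im]
  have p1 : (0:ℝ) < z.im * w.im := by positivity
  have p2 : (0:ℝ) < z'.im * w'.im := by positivity
  have q1 : dist (z' : ℂ) (w' : ℂ) / (2 * Real.sqrt (z'.im * w'.im)) ≥ 0 := by positivity
  have q2 : dist (z : ℂ) (w : ℂ) / (2 * Real.sqrt (z.im * w.im)) ≥ 0 := by positivity
  have hsq : (dist (z' : ℂ) (w' : ℂ) / (2 * Real.sqrt (z'.im * w'.im))) ^ 2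
      = (dist (z : ℂ) (w : ℂ) / (2 * Real.sqrt (z.im * w.im))) ^ 2 := by
    rw [div_pow, div_pow, mul_pow, mul_pow, Real.sq_sqrt p1.le, Real.sq_sqrt p2.le,
      e1, e1, Real.sq_sqrt (by positivity), Real.sq_sqrt (by positivity)]
    rw [div_eq_div_iff (by positivity) (by positivity)]
    ring_nf
    ring_nf at h
    nlinarith [h]
  calc dist (z' : ℂ) (w' : ℂ) / (2 * Real.sqrt (z'.im * w'.im))
      = Real.sqrt ((dist (z' : ℂ) (w' : ℂ) / (2 * Real.sqrt (z'.im * w'.im))) ^ 2) :=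
        (Real.sqrt_sq q1).symm
    _ = Real.sqrt ((dist (z : ℂ) (w : ℂ) / (2 * Real.sqrt (z.im * w.im))) ^ 2) := by rw [hsq]
    _ = _ := Real.sqrt_sq q2

/-- horizontal translation -/
def shiftH (t : ℝ) (z : ℍ) : ℍ := ⟨⟨z.re + t, z.im⟩, z.im_pos⟩

@[simp] lemma shiftH_re (t : ℝ) (z : ℍ) : (shiftH t z).re = z.re + t := rfl
@[simp] lemma shiftH_im (t : ℝ) (z : ℍ) : (shiftH t z).im = z.im := rfl

lemma isomH_shiftH (t : ℝ) : IsomH (shiftH t) := by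
  constructor
  · intro w
    exact ⟨shiftH (-t) w, by apply UpperHalfPlane.ext' <;> simp⟩
  · intro z w
    apply dist_eq_dist
    simp only [shiftH_re, shiftH_im]
    ring

/-- dilation by a positive factor -/
def scaleH (r : ℝ) (hr : 0 < r) (z : ℍ) : ℍ := ⟨⟨r * z.re, r * z.im⟩, by
  have := z.im_pos; exact mul_pos hr this⟩

@[simp] lemma scaleH_re (r : ℝ) (hr : 0 < r) (z : ℍ) : (scaleH r hr z).re = r * z.re := rfl
@[simp] lemma scaleH_im (r : ℝ) (hr : 0 < r) (z : ℍ) : (scaleH r hr z).im = r * z.im := rfl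

lemma isomH_scaleH (r : ℝ) (hr : 0 < r) : IsomH (scaleH r hr) := by
  constructor
  · intro w
    refine ⟨scaleH r⁻¹ (by positivity) w, ?_⟩
    apply UpperHalfPlane.ext' <;> simp <;> field_simp
  · intro z w
    apply dist_eq_dist
    simp only [scaleH_re, scaleH_im]
    ring

/-- reflection in the imaginary axis -/
def reflH (z : ℍ) : ℍ := ⟨⟨-z.re, z.im⟩, z.im_pos⟩

@[simp] lemma reflH_re (z : ℍ) : (reflH z).re = -z.re := rfl
@[simp] lemma reflH_im (z : ℍ) : (reflH z).im = z.im := rfl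

lemma isomH_reflH : IsomH reflH := by
  constructor
  · intro w
    exact ⟨reflH w, by apply UpperHalfPlane.ext' <;> simp⟩
  · intro z w
    apply dist_eq_dist
    simp only [reflH_re, reflH_im]
    ring

/-- inversion in the unit circle, `z ↦ z / |z|²` -/
def invH (z : ℍ) : ℍ := ⟨⟨z.re / (z.re ^ 2 + z.im ^ 2), z.im / (z.re ^ 2 + z.im ^ 2)⟩, by
  have h := z.im_pos; positivity⟩

@[simp] lemma invH_re (z : ℍ) : (invH z).re = z.re / (z.re ^ 2 + z.im ^ 2) := rfl
@[simp] lemma invH_im (z : ℍ) : (invH z).im = z.im / (z.re ^ 2 + z.im ^ 2) := rfl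

lemma normSqH_pos (z : ℍ) : 0 < z.re ^ 2 + z.im ^ 2 := by
  have h := z.im_pos; positivity

lemma invH_invH (z : ℍ) : invH (invH z) = z := by
  have h := normSqH_pos z
  have e : ((invH z).re) ^ 2 + ((invH z).im) ^ 2 = 1 / (z.re ^ 2 + z.im ^ 2) := by
    rw [invH_re, invH_im]; field_simp
  apply UpperHalfPlane.ext'
  · rw [invH_re, e, invH_re]; field_simp
  · rw [invH_im, e, invH_im]; field_simp

lemma isomH_invH : IsomH invH := by
  constructor
  · intro w
    exact ⟨invH w, invH_invH w⟩
  · intro z w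
    have hz := normSqH_pos z
    have hw := normSqH_pos w
    apply dist_eq_dist
    simp only [invH_re, invH_im]
    field_simp
    ring

/-- the Möbius map `z ↦ (z - 1)/(z + 1)`, in coordinates -/
def moebH (z : ℍ) : ℍ :=
  ⟨⟨(z.re ^ 2 + z.im ^ 2 - 1) / ((z.re + 1) ^ 2 + z.im ^ 2),
    2 * z.im / ((z.re + 1) ^ 2 + z.im ^ 2)⟩, by
  have h := z.im_pos; positivity⟩

lemma moebD_pos (z : ℍ) : 0 < (z.re + 1) ^ 2 + z.im ^ 2 := by
  have h := z.im_pos; positivity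

@[simp] lemma moebH_re (z : ℍ) :
    (moebH z).re = (z.re ^ 2 + z.im ^ 2 - 1) / ((z.re + 1) ^ 2 + z.im ^ 2) := rfl
@[simp] lemma moebH_im (z : ℍ) :
    (moebH z).im = 2 * z.im / ((z.re + 1) ^ 2 + z.im ^ 2) := rfl

/-- inverse of `moebH`: `w ↦ (1 + w)/(1 - w)` -/
def moebH' (w : ℍ) : ℍ :=
  ⟨⟨(1 - (w.re ^ 2 + w.im ^ 2)) / ((1 - w.re) ^ 2 + w.im ^ 2),
    2 * w.im / ((1 - w.re) ^ 2 + w.im ^ 2)⟩, by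
  have h := w.im_pos; positivity⟩

lemma moebH_moebH' (w : ℍ) : moebH (moebH' w) = w := by
  have h := w.im_pos
  have hD : (0:ℝ) < (1 - w.re) ^ 2 + w.im ^ 2 := by positivity
  have hD2 : (0:ℝ) < ((moebH' w).re + 1) ^ 2 + (moebH' w).im ^ 2 := moebD_pos _
  apply UpperHalfPlane.ext'
  · show ((moebH' w).re ^ 2 + (moebH' w).im ^ 2 - 1) / (((moebH' w).re + 1) ^ 2 + (moebH' w).im ^ 2) = w.re
    show ((((1 - (w.re ^ 2 + w.im ^ 2)) / ((1 - w.re) ^ 2 + w.im ^ 2))) ^ 2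
        + (2 * w.im / ((1 - w.re) ^ 2 + w.im ^ 2)) ^ 2 - 1) /
        ((((1 - (w.re ^ 2 + w.im ^ 2)) / ((1 - w.re) ^ 2 + w.im ^ 2)) + 1) ^ 2
        + (2 * w.im / ((1 - w.re) ^ 2 + w.im ^ 2)) ^ 2) = w.re
    rw [div_eq_iff]
    · field_simp
      ring
    · field_simp
      intro hc
      have h4 : 0 < ((1 - (w.re ^ 2 + w.im ^ 2) + ((1 - w.re) ^ 2 + w.im ^ 2)) ^ 2 + w.im ^ 2 * 2 ^ 2) / ((1 - w.re) ^ 2 + w.im ^ 2) ^ 2 := by positivity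
      linarith
  · show 2 * ((2 * w.im / ((1 - w.re) ^ 2 + w.im ^ 2))) / (((1 - (w.re ^ 2 + w.im ^ 2)) / ((1 - w.re) ^ 2 + w.im ^ 2) + 1) ^ 2 + (2 * w.im / ((1 - w.re) ^ 2 + w.im ^ 2)) ^ 2) = w.im
    rw [div_eq_iff]
    · field_simp
      ring
    · field_simp
      intro hc
      have h4 : 0 < ((1 - (w.re ^ 2 + w.im ^ 2) + ((1 - w.re) ^ 2 + w.im ^ 2)) ^ 2 + w.im ^ 2 * 2 ^ 2) / ((1 - w.re) ^ 2 + w.im ^ 2) ^ 2 := by positivity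
      linarith

lemma isomH_moebH : IsomH moebH := by
  constructor
  · intro w
    exact ⟨moebH' w, moebH_moebH' w⟩
  · intro z w
    have hz := moebD_pos z
    have hw := moebD_pos w
    apply dist_eq_dist
    simp only [moebH_re, moebH_im]
    field_simp
    ring


/-- Möbius transformation taking the circle of center `k`, radius `R` to the imaginary axis -/
def cmap (k R : ℝ) (hR : 0 < R) (z : ℍ) : ℍ := moebH (scaleH R⁻¹ (by positivity) (shiftH (-k) z))

lemma isomH_cmap (k R : ℝ) (hR : 0 < R) : IsomH (cmap k R hR) :=
  (isomH_moebH.comp (isomH_scaleH _ _)).comp (isomH_shiftH _)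

lemma cmap_re_eq_zero_iff {k R : ℝ} (hR : 0 < R) (z : ℍ) :
    (cmap k R hR z).re = 0 ↔ (z.re - k) ^ 2 + z.im ^ 2 = R ^ 2 := by
  have hz := z.im_pos
  show ((R⁻¹ * (z.re + -k)) ^ 2 + (R⁻¹ * z.im) ^ 2 - 1) /
      ((R⁻¹ * (z.re + -k) + 1) ^ 2 + (R⁻¹ * z.im) ^ 2) = 0 ↔ _
  rw [div_eq_zero_iff]
  have hD : ((R⁻¹ * (z.re + -k) + 1) ^ 2 + (R⁻¹ * z.im) ^ 2) ≠ 0 := by positivity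
  simp only [hD, or_false]
  rw [sub_eq_zero]
  constructor
  · intro h
    have := h
    field_simp at this
    nlinarith [this]
  · intro h
    field_simp
    nlinarith [h]

lemma cmap_im_on_circle {k R : ℝ} (hR : 0 < R) (z : ℍ)
    (hz : (z.re - k) ^ 2 + z.im ^ 2 = R ^ 2) :
    (cmap k R hR z).im = z.im / (R + (z.re - k)) := by
  have hzim := z.im_pos
  have hu : -R < z.re - k := by nlinarith [sq_nonneg (z.re - k), hzim]
  have hden : (0:ℝ) < R + (z.re - k) := by linarith
  show 2 * (R⁻¹ * z.im) / ((R⁻¹ * (z.re + -k) + 1) ^ 2 + (R⁻¹ * z.im) ^ 2) = _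
  rw [div_eq_div_iff (by positivity) hden.ne']
  have hRi : R⁻¹ * R = 1 := inv_mul_cancel₀ hR.ne'
  linear_combination (-(z.im * R⁻¹ ^ 2)) * hz + (-(z.im * (R⁻¹ * R - 1))) * hRi

lemma sq_le_sq_of_nonneg {x y : ℝ} (hx : 0 ≤ x) (hy : 0 ≤ y) (h : x ^ 2 ≤ y ^ 2) : x ≤ y := by
  nlinarith

lemma cmap_im_le_on_circle {k R : ℝ} (hR : 0 < R) {z₁ z₂ : ℍ}
    (h1 : (z₁.re - k) ^ 2 + z₁.im ^ 2 = R ^ 2) (h2 : (z₂.re - k) ^ 2 + z₂.im ^ 2 = R ^ 2)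
    (hre : z₂.re ≤ z₁.re) :
    (cmap k R hR z₁).im ≤ (cmap k R hR z₂).im := by
  have p1 := z₁.im_pos; have p2 := z₂.im_pos
  rw [cmap_im_on_circle hR z₁ h1, cmap_im_on_circle hR z₂ h2]
  have hu1 : -R < z₁.re - k := by nlinarith [p1]
  have hu2 : -R < z₂.re - k := by nlinarith [p2]
  have hd1 : (0:ℝ) < R + (z₁.re - k) := by linarith
  have hd2 : (0:ℝ) < R + (z₂.re - k) := by linarith
  rw [div_le_div_iff₀ hd1 hd2]
  have e1 : z₁.im ^ 2 = R ^ 2 - (z₁.re - k) ^ 2 := by linarith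
  have e2 : z₂.im ^ 2 = R ^ 2 - (z₂.re - k) ^ 2 := by linarith
  have expand : z₂.im ^ 2 * (R + (z₁.re - k)) ^ 2 - z₁.im ^ 2 * (R + (z₂.re - k)) ^ 2
      = (R + (z₁.re - k)) * (R + (z₂.re - k)) * (2 * R) * (z₁.re - z₂.re) := by
    rw [e1, e2]; ring
  have key : 0 ≤ (R + (z₁.re - k)) * (R + (z₂.re - k)) * (2 * R) * (z₁.re - z₂.re) := by
    have : 0 ≤ z₁.re - z₂.re := by linarith
    positivity
  apply sq_le_sq_of_nonneg (by positivity) (by positivity)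
  nlinarith [expand, key]

lemma cmap_im_le_iff_on_circle {k R : ℝ} (hR : 0 < R) {z₁ z₂ : ℍ}
    (h1 : (z₁.re - k) ^ 2 + z₁.im ^ 2 = R ^ 2) (h2 : (z₂.re - k) ^ 2 + z₂.im ^ 2 = R ^ 2) :
    ((cmap k R hR z₁).im ≤ (cmap k R hR z₂).im ↔ z₂.re ≤ z₁.re) := by
  constructor
  · intro h
    by_contra hlt
    push_neg at hlt
    -- z₁.re < z₂.re; then im (cmap z₂) < im (cmap z₁)
    have p1 := z₁.im_pos; have p2 := z₂.im_pos
    rw [cmap_im_on_circle hR z₁ h1, cmap_im_on_circle hR z₂ h2] at h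
    have hu1 : -R < z₁.re - k := by nlinarith [p1]
    have hu2 : -R < z₂.re - k := by nlinarith [p2]
    have hd1 : (0:ℝ) < R + (z₁.re - k) := by linarith
    have hd2 : (0:ℝ) < R + (z₂.re - k) := by linarith
    rw [div_le_div_iff₀ hd1 hd2] at h
    have e1 : z₁.im ^ 2 = R ^ 2 - (z₁.re - k) ^ 2 := by linarith
    have e2 : z₂.im ^ 2 = R ^ 2 - (z₂.re - k) ^ 2 := by linarith
    have expand : z₂.im ^ 2 * (R + (z₁.re - k)) ^ 2 - z₁.im ^ 2 * (R + (z₂.re - k)) ^ 2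
        = (R + (z₁.re - k)) * (R + (z₂.re - k)) * (2 * R) * (z₁.re - z₂.re) := by
      rw [e1, e2]; ring
    have key : (R + (z₁.re - k)) * (R + (z₂.re - k)) * (2 * R) * (z₁.re - z₂.re) < 0 := by
      apply mul_neg_of_pos_of_neg
      · positivity
      · linarith
    have hsq : (z₁.im * (R + (z₂.re - k))) ^ 2 ≤ (z₂.im * (R + (z₁.re - k))) ^ 2 := by
      nlinarith [h, mul_pos p1 hd2, mul_pos p2 hd1]
    nlinarith [hsq, expand, key]
  · exact cmap_im_le_on_circle hR h1 h2

/-- characterization of geodesic segments as circular arcs -/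
lemma seg_circle {k R : ℝ} (hR : 0 < R) {u v : ℍ}
    (hu : (u.re - k) ^ 2 + u.im ^ 2 = R ^ 2) (hv : (v.re - k) ^ 2 + v.im ^ 2 = R ^ 2)
    (huv : u.re ≤ v.re) (z : ℍ) :
    z ∈ seg u v ↔ ((z.re - k) ^ 2 + z.im ^ 2 = R ^ 2 ∧ u.re ≤ z.re ∧ z.re ≤ v.re) := by
  set g := cmap k R hR with hg
  have hgi := isomH_cmap k R hR
  have himuv : (g v).im ≤ (g u).im := cmap_im_le_on_circle hR hv hu huv
  rw [hgi.seg_iff, seg_symm]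
  rw [seg_axis ((cmap_re_eq_zero_iff hR v).2 hv) ((cmap_re_eq_zero_iff hR u).2 hu) himuv]
  simp only [Set.mem_setOf_eq]
  constructor
  · rintro ⟨hz0, hz1, hz2⟩
    have hzc := (cmap_re_eq_zero_iff hR z).1 hz0
    exact ⟨hzc, (cmap_im_le_iff_on_circle hR hzc hu).1 hz2,
      (cmap_im_le_iff_on_circle hR hv hzc).1 hz1⟩
  · rintro ⟨hzc, hz1, hz2⟩
    exact ⟨(cmap_re_eq_zero_iff hR z).2 hzc,
      (cmap_im_le_iff_on_circle hR hv hzc).2 hz2,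
      (cmap_im_le_iff_on_circle hR hzc hu).2 hz1⟩

/-- every pair of points can be moved onto the imaginary axis by an isometry -/
lemma exists_normalizer (x y : ℍ) :
    ∃ g : ℍ → ℍ, IsomH g ∧ (g x).re = 0 ∧ (g y).re = 0 := by
  rcases eq_or_ne x.re y.re with h | h
  · refine ⟨shiftH (-x.re), isomH_shiftH _, by simp, by simp [← h]⟩
  · set k := ((x.re ^ 2 + x.im ^ 2) - (y.re ^ 2 + y.im ^ 2)) / (2 * (x.re - y.re)) with hk
    have hxk : (0:ℝ) < (x.re - k) ^ 2 + x.im ^ 2 := by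
      have := x.im_pos; positivity
    set R := Real.sqrt ((x.re - k) ^ 2 + x.im ^ 2) with hRdef
    have hR : 0 < R := Real.sqrt_pos.2 hxk
    have hR2 : R ^ 2 = (x.re - k) ^ 2 + x.im ^ 2 := Real.sq_sqrt hxk.le
    refine ⟨cmap k R hR, isomH_cmap k R hR, ?_, ?_⟩
    · rw [cmap_re_eq_zero_iff]
      exact hR2.symm
    · rw [cmap_re_eq_zero_iff, hR2]
      have hne : x.re - y.re ≠ 0 := sub_ne_zero.2 h
      have hk2 : k * (2 * (x.re - y.re)) = x.re ^ 2 + x.im ^ 2 - (y.re ^ 2 + y.im ^ 2) := by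
        rw [hk]; exact div_mul_cancel₀ _ (mul_ne_zero two_ne_zero hne)
      linear_combination hk2


/-- the point `i` of the upper half-plane -/
def iH : ℍ := ⟨⟨0, 1⟩, one_pos⟩

@[simp] lemma iH_re : iH.re = 0 := rfl
@[simp] lemma iH_im : iH.im = 1 := rfl

/-- membership in the closed hyperbolic ball of radius `dd` around `i`, in coordinates -/
lemma dist_iH_le_iff (z : ℍ) :
    dist iH z ≤ dd ↔ z.re ^ 2 + (z.im - Real.sqrt 2) ^ 2 ≤ 1 := by
  have hz := z.im_pos
  have h1 : Real.cosh (dist iH z) = (z.re ^ 2 + 1 + z.im ^ 2) / (2 * z.im) := by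
    rw [UpperHalfPlane.cosh_dist']
    simp only [iH_re, iH_im]
    ring_nf
  have h2 : dist iH z ≤ dd ↔ Real.cosh (dist iH z) ≤ Real.cosh dd := by
    rw [Real.cosh_le_cosh, abs_of_nonneg dist_nonneg, abs_of_nonneg dd_nonneg]
  rw [h2, h1, cosh_dd, div_le_iff₀ (by positivity)]
  constructor
  · intro h
    nlinarith [s2_sq]
  · intro h
    nlinarith [s2_sq]

lemma geodesic_param {γ : ℝ → ℍ} {x y : ℍ} (hγ : GeodesicFrom γ x y) {t : ℝ}
    (ht : t ∈ Set.Icc 0 (dist x y)) :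
    γ t ∈ seg x y ∧ dist x (γ t) = t := by
  obtain ⟨hiso, h0, h1⟩ := hγ
  have h00 : (0:ℝ) ∈ Set.Icc 0 (dist x y) := ⟨le_refl _, dist_nonneg⟩
  have h11 : dist x y ∈ Set.Icc 0 (dist x y) := ⟨dist_nonneg, le_refl _⟩
  have d1 : dist x (γ t) = t := by
    have := hiso 0 h00 t ht
    rw [h0] at this
    rw [this, abs_of_nonpos (by linarith [ht.1]), neg_sub, sub_zero]
  have d2 : dist (γ t) y = dist x y - t := by
    have := hiso t ht (dist x y) h11
    rw [h1] at this
    rw [this, abs_of_nonpos (by linarith [ht.2])]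
    ring
  exact ⟨by rw [seg, Set.mem_setOf_eq, d1, d2]; ring, d1⟩

/-- two points of a geodesic segment at the same distance from an endpoint coincide -/
lemma seg_unique {x y z z' : ℍ} (hz : z ∈ seg x y) (hz' : z' ∈ seg x y)
    (hd : dist x z = dist x z') : z = z' := by
  obtain ⟨g, hg, hgx, hgy⟩ := exists_normalizer x y
  have conclude : (g z).re = 0 → (g z').re = 0 → (g z).im = (g z').im → z = z' := by
    intro e0 f0 him
    have hgz : g z = g z' := UpperHalfPlane.ext' (by rw [e0, f0]) him
    have : dist z z' = 0 := by rw [← hg.2, hgz, dist_self]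
    exact dist_eq_zero.1 this
  rcases le_total (g x).im (g y).im with hc | hc
  · have key : ∀ w : ℍ, w ∈ seg x y → (g w).re = 0 ∧
        Real.log (g w).im - Real.log (g x).im = dist x w := by
      intro w hw
      have := (hg.seg_iff (x := x) (y := y) (z := w)).1 hw
      rw [seg_axis hgx hgy hc] at this
      obtain ⟨h0, h1, h2⟩ := this
      refine ⟨h0, ?_⟩
      rw [← hg.2 x w, dist_re_eq (by rw [hgx, h0]), abs_sub_comm,
        abs_of_nonneg (sub_nonneg.2 (Real.log_le_log (g x).im_pos h1))]
    obtain ⟨e0, e1⟩ := key z hz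
    obtain ⟨f0, f1⟩ := key z' hz'
    refine conclude e0 f0 ?_
    have hl : Real.log (g z).im = Real.log (g z').im := by rw [← hd] at f1; linarith
    rw [← Real.exp_log (g z).im_pos, ← Real.exp_log (g z').im_pos, hl]
  · have key : ∀ w : ℍ, w ∈ seg x y → (g w).re = 0 ∧
        Real.log (g x).im - Real.log (g w).im = dist x w := by
      intro w hw
      have hw2 : w ∈ seg y x := by rw [← seg_symm]; exact hw
      have := (hg.seg_iff (x := y) (y := x) (z := w)).1 hw2
      rw [seg_axis hgy hgx hc] at this
      obtain ⟨h0, h1, h2⟩ := this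
      refine ⟨h0, ?_⟩
      rw [← hg.2 x w, dist_re_eq (by rw [hgx, h0]),
        abs_of_nonneg (sub_nonneg.2 (Real.log_le_log (g w).im_pos h2))]
    obtain ⟨e0, e1⟩ := key z hz
    obtain ⟨f0, f1⟩ := key z' hz'
    refine conclude e0 f0 ?_
    have hl : Real.log (g z).im = Real.log (g z').im := by rw [← hd] at f1; linarith
    rw [← Real.exp_log (g z).im_pos, ← Real.exp_log (g z').im_pos, hl]

/-- every point of the metric segment lies on any given geodesic -/
lemma seg_subset_image {γ : ℝ → ℍ} {x y : ℍ} (hγ : GeodesicFrom γ x y) :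
    seg x y ⊆ γ '' Set.Icc 0 (dist x y) := by
  intro z hz
  have ht : dist x z ∈ Set.Icc 0 (dist x y) := by
    refine ⟨dist_nonneg, ?_⟩
    have := hz
    rw [seg, Set.mem_setOf_eq] at this
    have := dist_nonneg (x := z) (y := y)
    linarith
  obtain ⟨hmem, hdist⟩ := geodesic_param hγ ht
  exact ⟨dist x z, ht, seg_unique hmem hz hdist⟩

/-- transport of the main statement along an isometry -/
lemma pullback {a b c p : ℍ} (g : ℍ → ℍ) (hg : IsomH g)
    (h : ∃ q ∈ seg (g b) (g c) ∪ seg (g c) (g a), dist (g p) q ≤ dd) :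
    ∃ q ∈ seg b c ∪ seg c a, dist p q ≤ dd := by
  obtain ⟨q', hq', hdq⟩ := h
  obtain ⟨q, rfl⟩ := hg.1 q'
  refine ⟨q, ?_, by rwa [hg.2] at hdq⟩
  rcases hq' with h' | h'
  · exact Or.inl ((hg.seg_iff).2 h')
  · exact Or.inr ((hg.seg_iff).2 h')



lemma helper_one_le_of_sq (x : ℝ) (hx : 0 < x) (h : 1 ≤ x ^ 2) : 1 ≤ x := by nlinarith

lemma helper_sq_lt_one (x s : ℝ) (hx : 0 < x) (h : x < s - 1) (hs2 : s ^ 2 = 2)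
    (hsp : 0 < s) : x ^ 2 < 1 := by nlinarith

lemma helper_sq_lt_one' (x : ℝ) (h0 : 0 ≤ x) (h1 : x < 1) : x ^ 2 < 1 := by nlinarith

lemma helper_sq_le_one (x : ℝ) (h0 : 0 ≤ x) (h1 : x ≤ 1) : x ^ 2 ≤ 1 := by nlinarith

lemma helper_k1l (xc yc y0 : ℝ) (hxc : 0 < xc) (hycp : 0 < yc)
    (hc1 : 1 ≤ xc ^ 2 + yc ^ 2) (hy0s : y0 ^ 2 < 1) :
    (1 - y0 ^ 2) * xc < xc ^ 2 + yc ^ 2 - y0 ^ 2 := by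
  rcases le_or_gt 1 xc with h1 | h1
  · nlinarith
  · nlinarith

lemma helper_low (s xw : ℝ) (hs2 : s ^ 2 = 2) (h0 : 0 ≤ xw) (h1 : xw ≤ s / 2) :
    (s / 2) ^ 2 ≤ 1 - xw ^ 2 := by nlinarith

lemma helper_iball (s xw yw : ℝ) (hs2 : s ^ 2 = 2) (hsp : 0 < s)
    (hywsq : yw ^ 2 = 1 - xw ^ 2) (hyws : s / 2 ≤ yw) : xw ^ 2 + (yw - s) ^ 2 ≤ 1 := by
  have m3 : 0 ≤ s * (yw - s / 2) := mul_nonneg hsp.le (by linarith)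
  nlinarith

lemma helper_hk1u (s k1 xw y0 : ℝ) (h8 : 2 * k1 * (s / 2) < 2 * k1 * xw)
    (hxwk : 2 * k1 * xw = 1 - y0 ^ 2) : s * k1 < 1 - y0 ^ 2 := by nlinarith

lemma helper_h2k1 (s k1 y0 : ℝ) (h9 : s * (s * k1) < s * (1 - y0 ^ 2)) (hs2 : s ^ 2 = 2) :
    2 * k1 < s * (1 - y0 ^ 2) := by
  have e : s * (s * k1) = 2 * k1 := by linear_combination k1 * hs2
  linarith [h9, e]

lemma helper_hcs (xc yc y0 s k1 : ℝ) (hk1c : 2 * k1 * xc = xc ^ 2 + yc ^ 2 - y0 ^ 2)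
    (h2k1 : 2 * k1 < s * (1 - y0 ^ 2)) (hxc1 : xc ≤ 1) (hk1 : 0 < k1) (hs1 : 1 < s) :
    xc ^ 2 + yc ^ 2 ≤ s := by
  have m1 : 0 ≤ (1 - xc) * (2 * k1) := mul_nonneg (by linarith) (by linarith)
  have m2 : 0 ≤ (s - 1) * y0 ^ 2 := mul_nonneg (by linarith) (sq_nonneg _)
  nlinarith

lemma helper_hb2 (s y1 : ℝ) (hy1 : s + 1 < y1) (hsp : 0 < s) : (s + 1) ^ 2 < y1 ^ 2 := by
  nlinarith

lemma helper_hk2 (cc s y1 : ℝ) (hcc : cc ≤ s) (hb2 : (s + 1) ^ 2 < y1 ^ 2)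
    (hs2 : s ^ 2 = 2) (hsp : 0 < s) : cc - y1 ^ 2 < 0 := by nlinarith

set_option maxHeartbeats 1000000 in
/-- arithmetic core for case (ii): the circle through `a` meets the disk -/
lemma arith_ii (s k1 y0 : ℝ) (hs2 : s ^ 2 = 2) (hs2p : 0 < s) (hy0p : 0 < y0)
    (hy0 : y0 < s - 1) (hk1 : 0 < k1) (hk1l : 1 - y0 ^ 2 < 2 * k1) :
    ∃ xs ys : ℝ, 0 < ys ∧ xs ^ 2 + (ys - s) ^ 2 = 1 ∧
      (xs - k1) ^ 2 + ys ^ 2 = k1 ^ 2 + y0 ^ 2 ∧ 0 < xs ∧ xs ≤ 1 := by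
  have hy0s : y0 ^ 2 < 1 := by nlinarith
  set A : ℝ := 8 + 4 * k1 ^ 2 with hAdef
  set B : ℝ := 4 * k1 * (y0 ^ 2 - 3) with hBdef
  set C : ℝ := (y0 ^ 2 - 3) ^ 2 - 8 with hCdef
  have hApos : 0 < A := by positivity
  have hdisc : 0 ≤ B ^ 2 - 4 * A * C := by
    rw [hAdef, hBdef, hCdef]
    nlinarith [hk1l, sq_nonneg y0, hy0s]
  set sd : ℝ := Real.sqrt (B ^ 2 - 4 * A * C) with hsddef
  have hsdsq : sd ^ 2 = B ^ 2 - 4 * A * C := Real.sq_sqrt hdisc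
  set xs : ℝ := (-B - sd) / (2 * A) with hxsdef
  have h1 : 2 * A * xs + B = -sd := by
    rw [hxsdef]
    field_simp
    ring
  have h2 : 4 * A * (A * xs ^ 2 + B * xs + C) = (2 * A * xs + B) ^ 2 - sd ^ 2 := by
    rw [hsdsq]; ring
  have h3 : 4 * A * (A * xs ^ 2 + B * xs + C) = 0 := by rw [h2, h1]; ring
  have hquad : A * xs ^ 2 + B * xs + C = 0 := by
    rcases mul_eq_zero.mp h3 with h | h
    · exact absurd h (by positivity)
    · exact h
  have key : 8 * xs ^ 2 + (2 * k1 * xs + y0 ^ 2 - 3) ^ 2 = 8 := by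
    linear_combination hquad
  set ys : ℝ := s * (2 * k1 * xs + y0 ^ 2 + 1) / 4 with hysdef
  have E1 : xs ^ 2 + (ys - s) ^ 2 = 1 := by
    rw [hysdef]
    linear_combination (1 / 8) * key + ((2 * k1 * xs + y0 ^ 2 - 3) ^ 2 / 16) * hs2
  have E2 : (xs - k1) ^ 2 + ys ^ 2 = k1 ^ 2 + y0 ^ 2 := by
    rw [hysdef]
    linear_combination (1 / 8) * key + ((2 * k1 * xs + y0 ^ 2 + 1) ^ 2 / 16) * hs2
  have hys1 : s - 1 ≤ ys := by nlinarith [E1, sq_nonneg xs]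
  have hyspos : 0 < ys := by linarith
  have hxs1 : xs ≤ 1 := by
    have hx2 : xs ^ 2 ≤ 1 := by linarith [E1, sq_nonneg (ys - s)]
    exact (abs_le.1 ((sq_le_one_iff_abs_le_one xs).1 hx2)).2
  have hxspos : 0 < xs := by nlinarith [E2, hys1, hy0, hy0p, hk1]
  exact ⟨xs, ys, hyspos, E1, E2, hxspos, hxs1⟩

set_option maxHeartbeats 1000000 in
/-- arithmetic core for case (ii-b): the circle through `b` crosses height `√2` inside the disk -/
lemma arith_iib (s y1 xc yc k2 : ℝ) (hs2 : s ^ 2 = 2) (hs2p : 0 < s) (hy1 : s + 1 < y1)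
    (hxc : 0 < xc) (hxc1 : xc ≤ 1) (hcs : xc ^ 2 + yc ^ 2 ≤ s)
    (hk2c : 2 * k2 * xc = xc ^ 2 + yc ^ 2 - y1 ^ 2) (hk2 : k2 < 0) :
    ∃ x0 : ℝ, 0 ≤ x0 ∧ x0 ≤ 1 ∧ (x0 - k2) ^ 2 + s ^ 2 = k2 ^ 2 + y1 ^ 2 ∧ x0 ≤ xc := by
  have hslt2 : s < 2 := by nlinarith
  have hy1sq : 3 + 2 * s < y1 ^ 2 := by nlinarith
  have harg : (0:ℝ) ≤ k2 ^ 2 + y1 ^ 2 - 2 := by nlinarith [sq_nonneg k2]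
  set r : ℝ := Real.sqrt (k2 ^ 2 + y1 ^ 2 - 2) with hrdef
  have hrsq : r ^ 2 = k2 ^ 2 + y1 ^ 2 - 2 := Real.sq_sqrt harg
  have hrpos : 0 ≤ r := Real.sqrt_nonneg _
  set x0 : ℝ := k2 + r with hx0def
  have q_on : (x0 - k2) ^ 2 + s ^ 2 = k2 ^ 2 + y1 ^ 2 := by
    rw [hx0def]
    linear_combination hrsq + hs2
  have hx00 : 0 ≤ x0 := by
    have h1 : Real.sqrt (k2 ^ 2) ≤ r := Real.sqrt_le_sqrt (by nlinarith)
    rw [Real.sqrt_sq_eq_abs, abs_of_neg hk2] at h1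
    rw [hx0def]; linarith
  have hub : y1 ^ 2 - 3 ≤ -2 * k2 := by
    have hne : (xc - 1) * (y1 ^ 2 - 3) ≤ 0 :=
      mul_nonpos_of_nonpos_of_nonneg (by linarith) (by nlinarith)
    have h2 : xc * (y1 ^ 2 - 3) ≤ y1 ^ 2 - (xc ^ 2 + yc ^ 2) := by nlinarith
    nlinarith [hk2c, h2, hxc]
  have hx01 : x0 ≤ 1 := by
    have h1 : r ≤ 1 - k2 := by
      have h2 : k2 ^ 2 + y1 ^ 2 - 2 ≤ (1 - k2) ^ 2 := by nlinarith
      calc r ≤ Real.sqrt ((1 - k2) ^ 2) := Real.sqrt_le_sqrt h2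
        _ = 1 - k2 := by rw [Real.sqrt_sq (by linarith)]
    rw [hx0def]; linarith
  have e_q : 2 * k2 * x0 = x0 ^ 2 + 2 - y1 ^ 2 := by linear_combination (-1) * q_on + hs2
  have hx0xc : x0 ≤ xc := by
    have h5 : 2 * k2 * (x0 - xc) = x0 ^ 2 + 2 - (xc ^ 2 + yc ^ 2) := by
      linarith [e_q, hk2c]
    have h6 : 0 < x0 ^ 2 + 2 - (xc ^ 2 + yc ^ 2) := by nlinarith [sq_nonneg x0]
    by_contra hcon
    push_neg at hcon
    have : 2 * k2 * (x0 - xc) < 0 :=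
      mul_neg_of_neg_of_pos (by linarith) (by linarith)
    linarith
  exact ⟨x0, hx00, hx01, q_on, hx0xc⟩

set_option maxHeartbeats 1600000 in
/-- main geometric lemma in normalized coordinates -/
lemma mainN (a b c : ℍ) (ha : a.re = 0) (hb : b.re = 0) (hab : a.im ≤ b.im)
    (hseg : iH ∈ seg a b) (hc0 : 0 ≤ c.re) (hc1 : 1 ≤ c.re ^ 2 + c.im ^ 2)
    (hA : dd < dist iH a) (hB : dd < dist iH b) (hC : dd < dist iH c) :
    ∃ q ∈ seg b c ∪ seg c a, dist iH q ≤ dd := by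
  have hs2 := s2_sq
  have hs2p := s2_pos
  have hs2one := one_lt_s2
  set s : ℝ := Real.sqrt 2 with hsdef
  -- coordinates of a, b between
  have hmem := hseg
  rw [seg_axis ha hb hab] at hmem
  obtain ⟨-, haim, hbim⟩ := hmem
  rw [iH_im] at haim hbim
  have hy0p := a.im_pos
  have hy1p := b.im_pos
  -- a.im < s - 1
  have hy0 : a.im < s - 1 := by
    have hd : dist iH a = -Real.log a.im := by
      rw [dist_re_eq (by rw [iH_re, ha]), iH_im, Real.log_one, zero_sub, abs_neg,
        abs_of_nonpos (Real.log_nonpos hy0p.le haim)]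
    rw [hd] at hA
    have h1 : Real.log a.im < -dd := by linarith
    have h2 := (Real.exp_lt_exp.2 h1).trans_eq exp_neg_dd
    rwa [Real.exp_log hy0p] at h2
  have hy1 : s + 1 < b.im := by
    have hd : dist iH b = Real.log b.im := by
      rw [dist_re_eq (by rw [iH_re, hb]), iH_im, Real.log_one, zero_sub, abs_neg,
        abs_of_nonneg (Real.log_nonneg hbim)]
    rw [hd] at hB
    have h2 := (Real.exp_lt_exp.2 hB).trans_eq' exp_dd
    rw [Real.exp_log hy1p] at h2
    linarith
  have hDc : 1 < c.re ^ 2 + (c.im - s) ^ 2 := by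
    by_contra hcon
    push_neg at hcon
    exact absurd ((dist_iH_le_iff c).2 hcon) (not_le.2 hC)
  have hycp := c.im_pos
  clear hA hB hC hseg hab
  -- degenerate case : c on the imaginary axis
  rcases eq_or_lt_of_le hc0 with hxc | hxc
  · rw [← hxc] at hc1
    have hyc1 : 1 ≤ c.im := helper_one_le_of_sq c.im hycp (by simpa using hc1)
    refine ⟨iH, Or.inr ?_, by rw [dist_self]; exact dd_nonneg⟩
    rw [seg_symm, seg_axis ha hxc.symm (by linarith : a.im ≤ c.im)]
    exact ⟨iH_re, haim, by rw [iH_im]; exact hyc1⟩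
  -- main case
  have hy0s : a.im ^ 2 < 1 := helper_sq_lt_one a.im s hy0p hy0 hs2 hs2p
  set k1 : ℝ := (c.re ^ 2 + c.im ^ 2 - a.im ^ 2) / (2 * c.re) with hk1def
  have hk1 : 0 < k1 := by
    apply div_pos ?_ (by linarith)
    linarith
  have hk1c : 2 * k1 * c.re = c.re ^ 2 + c.im ^ 2 - a.im ^ 2 := by
    rw [hk1def]
    field_simp
  set R1 : ℝ := Real.sqrt (k1 ^ 2 + a.im ^ 2) with hR1def
  have hR1pos : 0 < R1 := Real.sqrt_pos.2 (by positivity)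
  have hR1sq : R1 ^ 2 = k1 ^ 2 + a.im ^ 2 := Real.sq_sqrt (by positivity)
  have ha_on : (a.re - k1) ^ 2 + a.im ^ 2 = R1 ^ 2 := by rw [hR1sq, ha]; ring
  have hc_on : (c.re - k1) ^ 2 + c.im ^ 2 = R1 ^ 2 := by
    rw [hR1sq]; linear_combination (-1) * hk1c
  have hk1l : 1 - a.im ^ 2 < 2 * k1 := by
    have h2 : (1 - a.im ^ 2) * c.re < (2 * k1) * c.re := by
      have h3 : (2 * k1) * c.re = c.re ^ 2 + c.im ^ 2 - a.im ^ 2 := by linarith [hk1c]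
      rw [h3]
      exact helper_k1l c.re c.im a.im hxc hycp hc1 hy0s
    exact lt_of_mul_lt_mul_right h2 hxc.le
  set xw : ℝ := (1 - a.im ^ 2) / (2 * k1) with hxwdef
  have hxw0 : 0 ≤ xw := by
    rw [hxwdef]
    apply div_nonneg (by linarith) (by linarith)
  have hxwk : 2 * k1 * xw = 1 - a.im ^ 2 := by
    rw [hxwdef]
    field_simp
  have hxw1 : xw < 1 := by
    rw [hxwdef, div_lt_one (by linarith)]
    exact hk1l
  have hxwc : xw ≤ c.re := by
    rw [hxwdef, div_le_iff₀ (by linarith)]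
    have hk1c' : c.re * (2 * k1) = c.re ^ 2 + c.im ^ 2 - a.im ^ 2 := by
      linear_combination hk1c
    linarith [hk1c', hc1]
  rcases le_or_gt xw (s / 2) with hcase | hcase
  -- CASE (i) : the unit-circle crossing is high; it lies in the ball
  · have hyw : (0:ℝ) < 1 - xw ^ 2 := by
      have := helper_sq_lt_one' xw hxw0 hxw1
      linarith
    set yw : ℝ := Real.sqrt (1 - xw ^ 2) with hywdef
    have hywpos : 0 < yw := Real.sqrt_pos.2 hyw
    have hywsq : yw ^ 2 = 1 - xw ^ 2 := Real.sq_sqrt hyw.le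
    set w : ℍ := ⟨⟨xw, yw⟩, hywpos⟩ with hwdef
    have hw_re : w.re = xw := rfl
    have hw_im : w.im = yw := rfl
    have hw_on : (w.re - k1) ^ 2 + w.im ^ 2 = R1 ^ 2 := by
      rw [hw_re, hw_im, hywsq, hR1sq]
      linear_combination (-1) * hxwk
    refine ⟨w, Or.inr ?_, ?_⟩
    · rw [seg_symm]
      rw [seg_circle hR1pos ha_on hc_on (by rw [ha]; exact hc0) w]
      exact ⟨hw_on, by rw [ha, hw_re]; exact hxw0, by rw [hw_re]; exact hxwc⟩
    · rw [dist_iH_le_iff, hw_re, hw_im]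
      have hyws : s / 2 ≤ yw := by
        apply sq_le_sq_of_nonneg (by positivity) hywpos.le
        rw [hywsq]
        exact helper_low s xw hs2 hxw0 hcase
      exact helper_iball s xw yw hs2 hs2p hywsq hyws
  -- CASE (ii)
  · have hk1u : s * k1 < 1 - a.im ^ 2 := by
      have h8 := mul_lt_mul_of_pos_left hcase (by linarith : (0:ℝ) < 2 * k1)
      exact helper_hk1u s k1 xw a.im h8 hxwk
    obtain ⟨xs, ys, hyspos, E1, E2, hxspos, hxs1⟩ :=
      arith_ii s k1 a.im hs2 hs2p hy0p hy0 hk1 hk1l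
    have e2' : 2 * k1 * xs = xs ^ 2 + ys ^ 2 - a.im ^ 2 := by linear_combination (-1) * E2
    rcases le_or_gt (xs ^ 2 + ys ^ 2) (c.re ^ 2 + c.im ^ 2) with hsub | hsub
    -- CASE (ii-a) : the intersection point is on the arc from a to c
    · set zs : ℍ := ⟨⟨xs, ys⟩, hyspos⟩ with hzsdef
      have hzs_re : zs.re = xs := rfl
      have hzs_im : zs.im = ys := rfl
      have hxsxc : xs ≤ c.re := by
        have h7 : 2 * k1 * xs ≤ 2 * k1 * c.re := by linarith [e2', hk1c]
        exact le_of_mul_le_mul_left h7 (by linarith)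
      refine ⟨zs, Or.inr ?_, ?_⟩
      · rw [seg_symm]
        rw [seg_circle hR1pos ha_on hc_on (by rw [ha]; exact hc0) zs]
        refine ⟨by rw [hzs_re, hzs_im, hR1sq]; exact E2, by rw [ha, hzs_re]; linarith, by rw [hzs_re]; exact hxsxc⟩
      · rw [dist_iH_le_iff, hzs_re, hzs_im]
        linarith [E1.le]
    -- CASE (ii-b) : use the side from b to c
    · have hxcxs : c.re < xs := by
        have h7 : 2 * k1 * c.re < 2 * k1 * xs := by linarith [e2', hk1c]
        exact lt_of_mul_lt_mul_left h7 (by linarith)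
      have hxc1 : c.re ≤ 1 := by linarith
      have h2k1 : 2 * k1 < s * (1 - a.im ^ 2) := by
        have h9 := mul_lt_mul_of_pos_left hk1u hs2p
        exact helper_h2k1 s k1 a.im h9 hs2
      have hcs : c.re ^ 2 + c.im ^ 2 ≤ s :=
        helper_hcs c.re c.im a.im s k1 hk1c h2k1 hxc1 hk1 hs2one
      set k2 : ℝ := (c.re ^ 2 + c.im ^ 2 - b.im ^ 2) / (2 * c.re) with hk2def
      have hk2c : 2 * k2 * c.re = c.re ^ 2 + c.im ^ 2 - b.im ^ 2 := by
        rw [hk2def]; field_simp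
      have hb2 : (s + 1) ^ 2 < b.im ^ 2 := helper_hb2 s b.im hy1 hs2p
      have hk2 : k2 < 0 := by
        rw [hk2def]
        apply div_neg_of_neg_of_pos ?_ (by linarith)
        have := helper_hk2 (c.re ^ 2 + c.im ^ 2) s b.im hcs hb2 hs2 hs2p
        linarith
      obtain ⟨x0, hx00, hx01, q_on, hx0xc⟩ :=
        arith_iib s b.im c.re c.im k2 hs2 hs2p hy1 hxc hxc1 hcs hk2c hk2
      set q : ℍ := ⟨⟨x0, s⟩, hs2p⟩ with hqdef
      have hq_re : q.re = x0 := rfl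
      have hq_im : q.im = s := rfl
      set R2 : ℝ := Real.sqrt (k2 ^ 2 + b.im ^ 2) with hR2def
      have hR2pos : 0 < R2 := Real.sqrt_pos.2 (by positivity)
      have hR2sq : R2 ^ 2 = k2 ^ 2 + b.im ^ 2 := Real.sq_sqrt (by positivity)
      have hb_on : (b.re - k2) ^ 2 + b.im ^ 2 = R2 ^ 2 := by rw [hR2sq, hb]; ring
      have hc_on2 : (c.re - k2) ^ 2 + c.im ^ 2 = R2 ^ 2 := by
        rw [hR2sq]; linear_combination (-1) * hk2c
      refine ⟨q, Or.inl ?_, ?_⟩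
      · rw [seg_circle hR2pos hb_on hc_on2 (by rw [hb]; exact hc0) q]
        exact ⟨by rw [hq_re, hq_im, hR2sq]; exact q_on, by rw [hb, hq_re]; exact hx00,
          by rw [hq_re]; exact hx0xc⟩
      · rw [dist_iH_le_iff, hq_re, hq_im]
        have e0 : x0 ^ 2 + (s - s) ^ 2 = x0 ^ 2 := by ring
        rw [e0]
        exact helper_sq_le_one x0 hx00 hx01


lemma invH_normSq (z : ℍ) :
    (invH z).re ^ 2 + (invH z).im ^ 2 = 1 / (z.re ^ 2 + z.im ^ 2) := by
  have h := normSqH_pos z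
  rw [invH_re, invH_im]; field_simp

lemma invH_iH : invH iH = iH := by
  apply UpperHalfPlane.ext'
  · rw [invH_re, iH_re, iH_im]; norm_num
  · rw [invH_im, iH_re, iH_im]; norm_num

lemma reflH_iH : reflH iH = iH := by
  apply UpperHalfPlane.ext'
  · rw [reflH_re, iH_re, neg_zero]
  · rfl

set_option maxHeartbeats 800000 in
lemma main_pre2 (a b c : ℍ) (ha : a.re = 0) (hb : b.re = 0) (hab : a.im ≤ b.im)
    (hseg : iH ∈ seg a b) (hc0 : 0 ≤ c.re)
    (hA : dd < dist iH a) (hB : dd < dist iH b) (hC : dd < dist iH c) :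
    ∃ q ∈ seg b c ∪ seg c a, dist iH q ≤ dd := by
  rcases le_or_gt 1 (c.re ^ 2 + c.im ^ 2) with hc1 | hc1
  · exact mainN a b c ha hb hab hseg hc0 hc1 hA hB hC
  · have hN : 0 < c.re ^ 2 + c.im ^ 2 := normSqH_pos c
    have hd : ∀ x : ℍ, dist iH (invH x) = dist iH x := by
      intro x
      rw [← isomH_invH.2 iH x, invH_iH]
    apply pullback invH isomH_invH
    rw [invH_iH, ← seg_union_comm (invH b) (invH a) (invH c)]
    have hbim := b.im_pos
    have haim := a.im_pos
    apply mainN (invH b) (invH a) (invH c)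
    · rw [invH_re, hb, zero_div]
    · rw [invH_re, ha, zero_div]
    · rw [invH_im, invH_im, ha, hb]
      rw [div_le_div_iff₀ (by positivity) (by positivity)]
      nlinarith [mul_nonneg (mul_pos haim hbim).le (sub_nonneg.2 hab)]
    · have h1 := isomH_invH.seg_iff.1 hseg
      rw [invH_iH] at h1
      exact (seg_symm (invH a) (invH b)) ▸ h1
    · rw [invH_re]
      positivity
    · rw [invH_normSq, le_div_iff₀ hN, one_mul]
      exact hc1.le
    · rw [hd]; exact hB
    · rw [hd]; exact hA
    · rw [hd]; exact hC

lemma main_pre (a b c : ℍ) (ha : a.re = 0) (hb : b.re = 0) (hab : a.im ≤ b.im)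
    (hseg : iH ∈ seg a b) (hA : dd < dist iH a) (hB : dd < dist iH b) (hC : dd < dist iH c) :
    ∃ q ∈ seg b c ∪ seg c a, dist iH q ≤ dd := by
  rcases le_or_gt 0 c.re with hc0 | hc0
  · exact main_pre2 a b c ha hb hab hseg hc0 hA hB hC
  · have hra : reflH a = a := UpperHalfPlane.ext' (by rw [reflH_re, ha, neg_zero]) rfl
    have hrb : reflH b = b := UpperHalfPlane.ext' (by rw [reflH_re, hb, neg_zero]) rfl
    apply pullback reflH isomH_reflH
    rw [hra, hrb, reflH_iH]
    apply main_pre2 a b (reflH c) ha hb hab hseg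
    · rw [reflH_re]; linarith
    · exact hA
    · exact hB
    · rw [← reflH_iH, isomH_reflH.2]; exact hC

lemma main_axis2 (a b c p : ℍ) (ha : a.re = 0) (hb : b.re = 0) (hab : a.im ≤ b.im)
    (hp : p ∈ seg a b) (hA : dd < dist p a) (hB : dd < dist p b) (hC : dd < dist p c) :
    ∃ q ∈ seg b c ∪ seg c a, dist p q ≤ dd := by
  have hp0 : p.re = 0 ∧ a.im ≤ p.im ∧ p.im ≤ b.im := by
    have h1 := hp
    rw [seg_axis ha hb hab] at h1
    exact h1
  have hr : (0:ℝ) < p.im⁻¹ := inv_pos.2 p.im_pos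
  have hpi : scaleH p.im⁻¹ hr p = iH := by
    apply UpperHalfPlane.ext'
    · rw [scaleH_re, hp0.1, mul_zero, iH_re]
    · rw [scaleH_im, iH_im]
      exact inv_mul_cancel₀ p.im_pos.ne'
  apply pullback (scaleH p.im⁻¹ hr) (isomH_scaleH p.im⁻¹ hr)
  rw [hpi]
  apply main_pre (scaleH p.im⁻¹ hr a) (scaleH p.im⁻¹ hr b) (scaleH p.im⁻¹ hr c)
  · rw [scaleH_re, ha, mul_zero]
  · rw [scaleH_re, hb, mul_zero]
  · rw [scaleH_im, scaleH_im]
    exact mul_le_mul_of_nonneg_left hab hr.le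
  · rw [← hpi]
    exact (isomH_scaleH p.im⁻¹ hr).seg_iff.1 hp
  · rw [← hpi, (isomH_scaleH p.im⁻¹ hr).2]; exact hA
  · rw [← hpi, (isomH_scaleH p.im⁻¹ hr).2]; exact hB
  · rw [← hpi, (isomH_scaleH p.im⁻¹ hr).2]; exact hC

lemma main_axis (a b c p : ℍ) (ha : a.re = 0) (hb : b.re = 0)
    (hp : p ∈ seg a b) (hA : dd < dist p a) (hB : dd < dist p b) (hC : dd < dist p c) :
    ∃ q ∈ seg b c ∪ seg c a, dist p q ≤ dd := by
  rcases le_total a.im b.im with h | h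
  · exact main_axis2 a b c p ha hb h hp hA hB hC
  · rw [seg_union_comm a b c]
    exact main_axis2 b a c p hb ha h ((seg_symm a b) ▸ hp) hB hA hC

/-- the main thin-triangle statement, in metric form -/
lemma main (a b c p : ℍ) (hp : p ∈ seg a b) :
    ∃ q ∈ seg b c ∪ seg c a, dist p q ≤ dd := by
  by_cases hA : dist p a ≤ dd
  · exact ⟨a, Or.inr (right_mem_seg c a), hA⟩
  by_cases hB : dist p b ≤ dd
  · exact ⟨b, Or.inl (left_mem_seg b c), hB⟩
  by_cases hC : dist p c ≤ dd
  · exact ⟨c, Or.inl (right_mem_seg b c), hC⟩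
  push_neg at hA hB hC
  obtain ⟨g, hg, hga, hgb⟩ := exists_normalizer a b
  apply pullback g hg
  exact main_axis (g a) (g b) (g c) (g p) hga hgb (hg.seg_iff.1 hp)
    (by rw [hg.2]; exact hA) (by rw [hg.2]; exact hB) (by rw [hg.2]; exact hC)

end ThinAux

open UpperHalfPlane in
/-- Every geodesic triangle in the hyperbolic plane ℍ² is δ-thin with
δ = ln(1 + √2). -/
theorem hyperbolic_plane_thin_triangles :
    ∀ T : GeoTriangle UpperHalfPlane, IsThin (Real.log (1 + Real.sqrt 2)) T := by
  intro T i p hp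
  fin_cases i
  · simp only [GeoTriangle.side] at hp
    obtain ⟨t, ht, rfl⟩ := hp
    obtain ⟨q, hq, hdq⟩ := ThinAux.main T.a T.b T.c _ (ThinAux.geodesic_param T.h1 ht).1
    refine ⟨q, ?_, hdq⟩
    rcases hq with h | h
    · exact Or.inl (ThinAux.seg_subset_image T.h2 h)
    · exact Or.inr (ThinAux.seg_subset_image T.h3 h)
  · simp only [GeoTriangle.side] at hp
    obtain ⟨t, ht, rfl⟩ := hp
    obtain ⟨q, hq, hdq⟩ := ThinAux.main T.b T.c T.a _ (ThinAux.geodesic_param T.h2 ht).1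
    refine ⟨q, ?_, hdq⟩
    rcases hq with h | h
    · exact Or.inl (ThinAux.seg_subset_image T.h3 h)
    · exact Or.inr (ThinAux.seg_subset_image T.h1 h)
  · simp only [GeoTriangle.side] at hp
    obtain ⟨t, ht, rfl⟩ := hp
    obtain ⟨q, hq, hdq⟩ := ThinAux.main T.c T.a T.b _ (ThinAux.geodesic_param T.h3 ht).1
    refine ⟨q, ?_, hdq⟩
    rcases hq with h | h
    · exact Or.inl (ThinAux.seg_subset_image T.h1 h)
    · exact Or.inr (ThinAux.seg_subset_image T.h2 h)
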